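/- Let X ∈ ℝ^{n×p}, y ∈ ℝ^n, α ∈ ℝ^p, β ∈ ℝ, w > 0, and set u = (w Xα + β y)/(w + β²). Then for every v ∈ ℝ^p, ‖y − βXv‖₂² + w‖X − Xvαᵀ‖_F² = (w + β²)‖u − Xv‖₂² + C, where C is a constant not depending on v. Consequently, v minimizes ‖y − βXv‖₂² + w‖X − Xvαᵀ‖_F² over {v : ‖v‖₁ ≤ c} if and only if v minimizes ‖u − Xv‖₂² over {v : ‖v‖₁ ≤ c}. -/
import Mathlib

open Matrix

/-- with u = (wXα + βy)/(w+β²), the SFM objective equals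
(w+β²)‖u − Xv‖₂² + C, hence minimizing it over the ℓ1 ball is equivalent
to the LASSO bound-form problem. -/
theorem stmt3 (n p : ℕ) (X : Matrix (Fin n) (Fin p) ℝ) (y : Fin n → ℝ)
    (α : Fin p → ℝ) (β w c : ℝ) (hw : 0 < w) (hα : (∑ j, (α j) ^ 2) = 1)
    (u : Fin n → ℝ) (hu : u = fun i => (w * X.mulVec α i + β * y i) / (w + β ^ 2)) :
    ∃ C : ℝ,
      (∀ v : Fin p → ℝ,
        (∑ i, (y i - β * X.mulVec v i) ^ 2)
          + w * ∑ i, ∑ j, (X i j - X.mulVec v i * α j) ^ 2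
        = (w + β ^ 2) * (∑ i, (u i - X.mulVec v i) ^ 2) + C) ∧
      (∀ v₀ : Fin p → ℝ, (∑ j, |v₀ j|) ≤ c →
        ((∀ v : Fin p → ℝ, (∑ j, |v j|) ≤ c →
            (∑ i, (y i - β * X.mulVec v₀ i) ^ 2)
              + w * ∑ i, ∑ j, (X i j - X.mulVec v₀ i * α j) ^ 2
            ≤ (∑ i, (y i - β * X.mulVec v i) ^ 2)
              + w * ∑ i, ∑ j, (X i j - X.mulVec v i * α j) ^ 2)
          ↔ (∀ v : Fin p → ℝ, (∑ j, |v j|) ≤ c →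
              (∑ i, (u i - X.mulVec v₀ i) ^ 2) ≤ ∑ i, (u i - X.mulVec v i) ^ 2))) := by
  have hwβ : (0:ℝ) < w + β ^ 2 := by positivity
  have hwβ' : w + β ^ 2 ≠ 0 := ne_of_gt hwβ
  refine ⟨∑ i, ((y i) ^ 2 + w * ∑ j, (X i j) ^ 2 - (w + β ^ 2) * (u i) ^ 2), ?_, ?_⟩
  · intro v
    have key : ∀ i, ∑ j, (X i j - X.mulVec v i * α j) ^ 2
        = (∑ j, (X i j) ^ 2) - 2 * X.mulVec v i * (∑ j, X i j * α j)
          + (X.mulVec v i) ^ 2 := by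
      intro i
      have h1 : ∀ j, (X i j - X.mulVec v i * α j) ^ 2
          = (X i j) ^ 2 - 2 * X.mulVec v i * (X i j * α j)
            + (X.mulVec v i) ^ 2 * (α j) ^ 2 := fun j => by ring
      simp_rw [h1, Finset.sum_add_distrib, Finset.sum_sub_distrib, ← Finset.mul_sum, hα]
      ring
    rw [Finset.mul_sum, ← Finset.sum_add_distrib, Finset.mul_sum, ← Finset.sum_add_distrib]
    refine Finset.sum_congr rfl fun i _ => ?_
    have hA : ∑ j, X i j * α j = X.mulVec α i := by
      simp [Matrix.mulVec, dotProduct]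
    rw [key i, hA, hu]
    field_simp
    ring
  · intro v₀ hv₀
    have key : ∀ v : Fin p → ℝ,
        (∑ i, (y i - β * X.mulVec v i) ^ 2)
          + w * ∑ i, ∑ j, (X i j - X.mulVec v i * α j) ^ 2
        = (w + β ^ 2) * (∑ i, (u i - X.mulVec v i) ^ 2)
          + ∑ i, ((y i) ^ 2 + w * ∑ j, (X i j) ^ 2 - (w + β ^ 2) * (u i) ^ 2) := by
      intro v
      have key2 : ∀ i, ∑ j, (X i j - X.mulVec v i * α j) ^ 2
          = (∑ j, (X i j) ^ 2) - 2 * X.mulVec v i * (∑ j, X i j * α j)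
            + (X.mulVec v i) ^ 2 := by
        intro i
        have h1 : ∀ j, (X i j - X.mulVec v i * α j) ^ 2
            = (X i j) ^ 2 - 2 * X.mulVec v i * (X i j * α j)
              + (X.mulVec v i) ^ 2 * (α j) ^ 2 := fun j => by ring
        simp_rw [h1, Finset.sum_add_distrib, Finset.sum_sub_distrib, ← Finset.mul_sum, hα]
        ring
      rw [Finset.mul_sum, ← Finset.sum_add_distrib, Finset.mul_sum, ← Finset.sum_add_distrib]
      refine Finset.sum_congr rfl fun i _ => ?_
      have hA : ∑ j, X i j * α j = X.mulVec α i := by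
        simp [Matrix.mulVec, dotProduct]
      rw [key2 i, hA, hu]
      field_simp
      ring
    constructor
    · intro h v hv
      have := h v hv
      rw [key v₀, key v] at this
      have h2 : (w + β ^ 2) * (∑ i, (u i - X.mulVec v₀ i) ^ 2)
          ≤ (w + β ^ 2) * (∑ i, (u i - X.mulVec v i) ^ 2) := by linarith
      exact le_of_mul_le_mul_left h2 hwβ
    · intro h v hv
      have := h v hv
      rw [key v₀, key v]
      nlinarith [this]
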